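/- Let G = (V,E,w) be a weighted graph and 0 < ψ ≤ 1. Let C ⊆ V and let S ⊊ C maximize vol(S) among subsets of C satisfying vol(S) ≤ vol(C)/2 and w(S, C∖S)/vol(S) ≤ ψ. If vol(S) ≤ r·vol(C) for some r ≤ 1/3, then the induced graph G{C∖S} (with self-loops added preserving degrees) has conductance at least ψ·(1−3r)/(1−r). -/
import Mathlib


open Finset

/-- Weighted degree of a vertex. -/
noncomputable def wdeg {V : Type*} [Fintype V] (w : V → V → ℝ) (u : V) : ℝ := ∑ v, w u v

/-- Weighted volume of a vertex set. -/
noncomputable def wvol {V : Type*} [Fintype V] (w : V → V → ℝ) (A : Finset V) : ℝ :=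
  ∑ u ∈ A, wdeg w u

/-- Total weight of edges between two vertex sets. -/
noncomputable def wcut {V : Type*} [Fintype V] (w : V → V → ℝ) (A B : Finset V) : ℝ :=
  ∑ u ∈ A, ∑ v ∈ B, w u v

set_option maxHeartbeats 1000000
lemma wvol_nonneg' {V : Type*} [Fintype V] (w : V → V → ℝ) (hnn : ∀ u v, 0 ≤ w u v)
    (A : Finset V) : 0 ≤ wvol w A :=
  Finset.sum_nonneg fun u _ => Finset.sum_nonneg fun v _ => hnn u v

lemma wcut_nonneg' {V : Type*} [Fintype V] (w : V → V → ℝ) (hnn : ∀ u v, 0 ≤ w u v)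
    (A B : Finset V) : 0 ≤ wcut w A B :=
  Finset.sum_nonneg fun u _ => Finset.sum_nonneg fun v _ => hnn u v

lemma wcut_comm' {V : Type*} [Fintype V] (w : V → V → ℝ) (hsymm : ∀ u v, w u v = w v u)
    (A B : Finset V) : wcut w A B = wcut w B A := by
  unfold wcut
  rw [Finset.sum_comm]
  exact Finset.sum_congr rfl fun v _ => Finset.sum_congr rfl fun u _ => hsymm u v

lemma wcut_mono_right' {V : Type*} [Fintype V] (w : V → V → ℝ) (hnn : ∀ u v, 0 ≤ w u v)
    (A : Finset V) {B B' : Finset V} (h : B ⊆ B') : wcut w A B ≤ wcut w A B' :=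
  Finset.sum_le_sum fun u _ =>
    Finset.sum_le_sum_of_subset_of_nonneg h (fun v _ _ => hnn u v)

/-- (Spielman–Teng.)  Let `G = (V,E,w)` be a weighted graph and `0 < ψ ≤ 1`.  Let `C ⊆ V` and
let `S ⊊ C` maximize `vol S` among subsets of `C` satisfying `vol S ≤ vol C / 2` and
`w(S, C∖S) ≤ ψ · vol S`.  If `vol S ≤ r · vol C` for some `r ≤ 1/3`, then the induced graph
`G{C∖S}` (degrees preserved, as in `G`) has conductance at least `ψ·(1−3r)/(1−r)`:
for every nonempty proper subset `T` of `C∖S`,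
`w(T, (C∖S)∖T) ≥ ψ(1−3r)/(1−r) · min(vol T, vol((C∖S)∖T))`. -/
theorem remaining_core_expands {V : Type*} [Fintype V] [DecidableEq V]
    (w : V → V → ℝ) (hsymm : ∀ u v, w u v = w v u) (hnn : ∀ u v, 0 ≤ w u v)
    (ψ : ℝ) (hψ0 : 0 < ψ) (hψ1 : ψ ≤ 1)
    (C S : Finset V) (hSC : S ⊂ C)
    (hS1 : wvol w S ≤ wvol w C / 2)
    (hS2 : wcut w S (C \ S) ≤ ψ * wvol w S)
    (hmax : ∀ S' ⊆ C, wvol w S' ≤ wvol w C / 2 → wcut w S' (C \ S') ≤ ψ * wvol w S' →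
      wvol w S' ≤ wvol w S)
    (r : ℝ) (hr0 : 0 ≤ r) (hr : r ≤ 1 / 3) (hrS : wvol w S ≤ r * wvol w C) :
    ∀ T ⊆ C \ S, T.Nonempty → T ≠ C \ S →
      ψ * (1 - 3 * r) / (1 - r) * min (wvol w T) (wvol w ((C \ S) \ T))
        ≤ wcut w T ((C \ S) \ T) := by
  intro T hT hTne hTne'
  by_contra hcon
  push_neg at hcon
  have h1r : (0:ℝ) < 1 - r := by linarith
  have hminnn : 0 ≤ min (wvol w T) (wvol w ((C \ S) \ T)) :=
    le_min (wvol_nonneg' w hnn T) (wvol_nonneg' w hnn _)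
  have hcut0 : 0 ≤ wcut w T ((C \ S) \ T) := wcut_nonneg' w hnn _ _
  have hprod : 0 < ψ * (1 - 3 * r) / (1 - r) * min (wvol w T) (wvol w ((C \ S) \ T)) :=
    lt_of_le_of_lt hcut0 hcon
  have hminpos : 0 < min (wvol w T) (wvol w ((C \ S) \ T)) := by
    rcases hminnn.lt_or_eq with h | h
    · exact h
    · rw [← h, mul_zero] at hprod; exact absurd hprod (lt_irrefl 0)
  have hψ' : 0 < ψ * (1 - 3 * r) / (1 - r) := by
    by_contra h
    push_neg at h
    nlinarith [mul_nonpos_of_nonpos_of_nonneg h hminnn]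
  have h13 : 0 < 1 - 3 * r := by
    by_contra h
    push_neg at h
    have h1 : ψ * (1 - 3 * r) ≤ 0 := mul_nonpos_of_nonneg_of_nonpos hψ0.le h
    have h2 : ψ * (1 - 3 * r) / (1 - r) ≤ 0 := div_nonpos_of_nonpos_of_nonneg h1 h1r.le
    linarith
  have hSsub : S ⊆ C := hSC.subset
  have hs0 : 0 ≤ wvol w S := wvol_nonneg' w hnn S
  have hdisjTTc : Disjoint T ((C \ S) \ T) := Finset.disjoint_sdiff
  have hunion : T ∪ ((C \ S) \ T) = C \ S := Finset.union_sdiff_of_subset hT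
  -- key sub-lemma
  have key : ∀ A A' : Finset V, Disjoint A A' → A ∪ A' = C \ S →
      wvol w A ≤ wvol w A' → 0 < wvol w A →
      wcut w A A' < ψ * (1 - 3 * r) / (1 - r) * wvol w A → False := by
    intro A A' hd hu hle hA0 hcut
    have hAsub : A ⊆ C \ S := hu ▸ Finset.subset_union_left
    have hA'sub : A' ⊆ C \ S := hu ▸ Finset.subset_union_right
    have hAC : A ⊆ C := hAsub.trans (Finset.sdiff_subset)
    have hA'C : A' ⊆ C := hA'sub.trans (Finset.sdiff_subset)
    have hvolCS : wvol w (C \ S) + wvol w S = wvol w C := Finset.sum_sdiff hSsub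
    have hAA' : wvol w A + wvol w A' = wvol w (C \ S) := by
      rw [← hu]; exact (Finset.sum_union hd).symm
    have hSdA : Disjoint S A := Finset.disjoint_sdiff.mono_right hAsub
    have hSdA' : Disjoint S A' := Finset.disjoint_sdiff.mono_right hA'sub
    have hcutSA' : wcut w S A' ≤ ψ * wvol w S :=
      le_trans (wcut_mono_right' w hnn S hA'sub) hS2
    have ha'0 : 0 ≤ wvol w A' := le_trans hA0.le hle
    by_cases hcase : wvol w S + wvol w A ≤ wvol w C / 2
    · -- take S' = S ∪ A
      have hset : C \ (S ∪ A) = A' := by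
        ext x
        have h1 := Finset.ext_iff.mp hu x
        have h2 : x ∈ A → x ∉ A' := fun hx => Finset.disjoint_left.mp hd hx
        have h3 : x ∈ S → x ∉ A := fun hx => Finset.disjoint_left.mp hSdA hx
        have h4 : x ∈ S → x ∉ A' := fun hx => Finset.disjoint_left.mp hSdA' hx
        simp only [Finset.mem_sdiff, Finset.mem_union] at *
        tauto
      have hvolU : wvol w (S ∪ A) = wvol w S + wvol w A := Finset.sum_union hSdA
      have hcutU : wcut w (S ∪ A) (C \ (S ∪ A)) = wcut w S A' + wcut w A A' := by
        rw [hset]; exact Finset.sum_union hSdA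
      have hψ'ψ : ψ * (1 - 3 * r) / (1 - r) ≤ ψ := by
        rw [div_le_iff₀ h1r]; nlinarith
      have hc1 : wcut w A A' ≤ ψ * wvol w A :=
        le_trans hcut.le (mul_le_mul_of_nonneg_right hψ'ψ hA0.le)
      have hcb : wcut w (S ∪ A) (C \ (S ∪ A)) ≤ ψ * wvol w (S ∪ A) := by
        rw [hcutU, hvolU]; nlinarith
      have := hmax (S ∪ A) (Finset.union_subset hSsub hAC) (by rw [hvolU]; exact hcase) hcb
      rw [hvolU] at this
      linarith
    · -- take S' = A'
      push_neg at hcase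
      have hset : C \ A' = S ∪ A := by
        ext x
        have h1 := Finset.ext_iff.mp hu x
        have h2 : x ∈ A → x ∉ A' := fun hx => Finset.disjoint_left.mp hd hx
        have h4 : x ∈ S → x ∉ A' := fun hx => Finset.disjoint_left.mp hSdA' hx
        have h5 : x ∈ S → x ∈ C := fun hx => hSsub hx
        simp only [Finset.mem_sdiff, Finset.mem_union] at *
        tauto
      have hvol' : wvol w A' ≤ wvol w C / 2 := by linarith
      have hkey : (1 - r) * wvol w S + (1 - 3 * r) * wvol w A ≤ (1 - r) * wvol w A' := by
        nlinarith [mul_nonneg h13.le (sub_nonneg.mpr hle),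
          mul_nonneg hr0 (by linarith : (0:ℝ) ≤ 2 * wvol w A' - (wvol w C - wvol w S))]
      have hcut' : (1 - r) * wcut w A A' < ψ * (1 - 3 * r) * wvol w A := by
        rw [div_mul_eq_mul_div, lt_div_iff₀ h1r] at hcut
        linarith
      have hcb : wcut w A' (C \ A') ≤ ψ * wvol w A' := by
        rw [hset]
        have hsplit2 : wcut w A' (S ∪ A) = wcut w A' S + wcut w A' A := by
          unfold wcut
          rw [← Finset.sum_add_distrib]
          exact Finset.sum_congr rfl fun u _ => Finset.sum_union hSdA
        rw [hsplit2, wcut_comm' w hsymm A' S, wcut_comm' w hsymm A' A]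
        have hψkey := mul_le_mul_of_nonneg_left hkey hψ0.le
        nlinarith [mul_le_mul_of_nonneg_left hcutSA' h1r.le]
      have hfin := hmax A' hA'C hvol' hcb
      have hc0 : 0 < wvol w C := by linarith
      nlinarith [mul_pos h13 hc0]
  rcases le_total (wvol w T) (wvol w ((C \ S) \ T)) with h | h
  · exact key T ((C \ S) \ T) hdisjTTc hunion h
      (by rwa [min_eq_left h] at hminpos) (by rwa [min_eq_left h] at hcon)
  · refine key ((C \ S) \ T) T hdisjTTc.symm (by rw [Finset.union_comm]; exact hunion) h
      (by rwa [min_eq_right h] at hminpos) ?_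
    rw [wcut_comm' w hsymm]
    rwa [min_eq_right h] at hcon
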